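/- Let d ≥ 1, let I be a metric space, let S : I → Matrix d d ℂ be continuous, and let Λ ⊆ Σ_I^+ be a nonempty compact θ_+-invariant subset. Then S is Λ-absolutely asymptotically stable (i.e. S_{i_n}···S_{i_1} → 0 as n → ∞ for every i(·) ∈ Λ) if and only if both of the following hold: (1) there exists β > 0 such that ‖S_{i_ℓ}···S_{i_1}‖ ≤ β for all ℓ ≥ 1 and all i(·) ∈ Λ; and (2) there exist γ ∈ (0,1) and an integer N ≥ 1 such that ρ(S_{i_ℓ}···S_{i_1}) ≤ γ for all ℓ ≥ N and all i(·) ∈ Λ. -/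

import Mathlib

open Filter Topology MeasureTheory

/-- Operator norm on `d × d` complex matrices induced by the Euclidean norm on `ℂ^d`. -/
noncomputable def opNorm {d : ℕ} (A : Matrix (Fin d) (Fin d) ℂ) : ℝ :=
  ‖Matrix.toEuclideanCLM (𝕜 := ℂ) A‖

/-- Spectral radius of a complex matrix, as a real number. -/
noncomputable def specRad {d : ℕ} (A : Matrix (Fin d) (Fin d) ℂ) : ℝ :=
  (spectralRadius ℂ A).toReal

/-- `prodS S x n = S_{i_n} ⋯ S_{i_1}` where `i_k = x (k-1)`. -/
noncomputable def prodS {d : ℕ} {I : Type*} (S : I → Matrix (Fin d) (Fin d) ℂ)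
    (x : ℕ → I) : ℕ → Matrix (Fin d) (Fin d) ℂ
  | 0 => 1
  | n + 1 => S (x n) * prodS S x n

/-- `Λ` is invariant under the one-sided shift `θ₊`. -/
def ShiftInv {I : Type*} (Λ : Set (ℕ → I)) : Prop :=
  ∀ x ∈ Λ, (fun n => x (n + 1)) ∈ Λ

set_option synthInstance.maxHeartbeats 1000000
set_option maxHeartbeats 2000000

section helpers

variable {d : ℕ} {I : Type*}

lemma prodS_add (S : I → Matrix (Fin d) (Fin d) ℂ) (x : ℕ → I) (a b : ℕ) :
    prodS S x (a + b) = prodS S (fun n => x (n + a)) b * prodS S x a := by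
  induction b with
  | zero => simp [prodS]
  | succ b ih =>
      have e : prodS S x (a + (b + 1)) = S (x (a + b)) * prodS S x (a + b) := rfl
      have e2 : prodS S (fun n => x (n + a)) (b + 1)
          = S (x (b + a)) * prodS S (fun n => x (n + a)) b := rfl
      rw [e, e2, ih, Nat.add_comm b a, mul_assoc]

lemma shift_mem {Λ : Set (ℕ → I)} (hinv : ShiftInv Λ) {x : ℕ → I} (hx : x ∈ Λ) (a : ℕ) :
    (fun n => x (n + a)) ∈ Λ := by
  induction a with
  | zero => simpa using hx
  | succ a ih =>
      have h := hinv _ ih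
      have : (fun n => x ((n + 1) + a)) = fun n => x (n + (a + 1)) := by
        funext n; congr 1; omega
      rwa [this] at h

lemma continuous_prodS [TopologicalSpace I] (S : I → Matrix (Fin d) (Fin d) ℂ)
    (hS : Continuous S) (n : ℕ) : Continuous fun x : ℕ → I => prodS S x n := by
  induction n with
  | zero => exact continuous_const
  | succ n ih => exact Continuous.matrix_mul (hS.comp (continuous_apply n)) ih

lemma continuous_toEuclideanCLM :
    Continuous fun A : Matrix (Fin d) (Fin d) ℂ => Matrix.toEuclideanCLM (𝕜 := ℂ) A := by
  let l : Matrix (Fin d) (Fin d) ℂ →ₗ[ℂ]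
      (EuclideanSpace ℂ (Fin d) →L[ℂ] EuclideanSpace ℂ (Fin d)) :=
    { toFun := fun A => Matrix.toEuclideanCLM (𝕜 := ℂ) A
      map_add' := fun a b => map_add _ a b
      map_smul' := fun c a => _root_.map_smul _ c a }
  exact l.continuous_of_finiteDimensional

lemma continuous_toEuclideanCLM_symm :
    Continuous fun T : EuclideanSpace ℂ (Fin d) →L[ℂ] EuclideanSpace ℂ (Fin d) =>
      (Matrix.toEuclideanCLM (𝕜 := ℂ)).symm T := by
  let l : (EuclideanSpace ℂ (Fin d) →L[ℂ] EuclideanSpace ℂ (Fin d)) →ₗ[ℂ]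
      Matrix (Fin d) (Fin d) ℂ :=
    { toFun := fun T => (Matrix.toEuclideanCLM (𝕜 := ℂ)).symm T
      map_add' := fun a b => map_add _ a b
      map_smul' := fun c a => _root_.map_smul _ c a }
  exact l.continuous_of_finiteDimensional

lemma opNorm_mul_le (A B : Matrix (Fin d) (Fin d) ℂ) :
    opNorm (A * B) ≤ opNorm A * opNorm B := by
  unfold opNorm
  rw [map_mul]
  exact norm_mul_le _ _

lemma opNorm_nonneg (A : Matrix (Fin d) (Fin d) ℂ) : 0 ≤ opNorm A := norm_nonneg _

lemma isUnit_toEuclideanCLM_iff (A : Matrix (Fin d) (Fin d) ℂ) :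
    IsUnit (Matrix.toEuclideanCLM (𝕜 := ℂ) A) ↔ IsUnit A := by
  constructor
  · intro h
    have := h.map (Matrix.toEuclideanCLM (𝕜 := ℂ)).symm
    simpa using this
  · intro h
    exact h.map _

lemma spectrum_toEuclideanCLM (A : Matrix (Fin d) (Fin d) ℂ) :
    spectrum ℂ (Matrix.toEuclideanCLM (𝕜 := ℂ) A) = spectrum ℂ A := by
  ext z
  rw [spectrum.mem_iff, spectrum.mem_iff, not_iff_not]
  have : algebraMap ℂ _ z - Matrix.toEuclideanCLM (𝕜 := ℂ) A
      = Matrix.toEuclideanCLM (𝕜 := ℂ) (algebraMap ℂ _ z - A) := by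
    rw [map_sub, Algebra.algebraMap_eq_smul_one, Algebra.algebraMap_eq_smul_one,
      _root_.map_smul, map_one]
  rw [this, isUnit_toEuclideanCLM_iff]

lemma spectralRadius_toEuclideanCLM (A : Matrix (Fin d) (Fin d) ℂ) :
    spectralRadius ℂ A = spectralRadius ℂ (Matrix.toEuclideanCLM (𝕜 := ℂ) A) := by
  unfold spectralRadius
  rw [spectrum_toEuclideanCLM]

lemma spectralRadius_ne_top (hd : 1 ≤ d) (A : Matrix (Fin d) (Fin d) ℂ) :
    spectralRadius ℂ A ≠ ⊤ := by
  haveI : Nonempty (Fin d) := ⟨⟨0, hd⟩⟩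
  rw [spectralRadius_toEuclideanCLM]
  exact ne_top_of_le_ne_top ENNReal.coe_ne_top (spectrum.spectralRadius_le_nnnorm _)

lemma specRad_le_opNorm (hd : 1 ≤ d) (A : Matrix (Fin d) (Fin d) ℂ) : specRad A ≤ opNorm A := by
  haveI : Nonempty (Fin d) := ⟨⟨0, hd⟩⟩
  unfold specRad opNorm
  rw [spectralRadius_toEuclideanCLM]
  have h := spectrum.spectralRadius_le_nnnorm (𝕜 := ℂ) (Matrix.toEuclideanCLM (𝕜 := ℂ) A)
  have := ENNReal.toReal_mono ENNReal.coe_ne_top h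
  simpa using this

lemma norm_le_of_mem_spectrum (hd : 1 ≤ d) {A : Matrix (Fin d) (Fin d) ℂ} {γ : ℝ}
    (h : specRad A ≤ γ) {z : ℂ} (hz : z ∈ spectrum ℂ A) : ‖z‖ ≤ γ := by
  have hle : (‖z‖₊ : ENNReal) ≤ spectralRadius ℂ A := le_iSup₂ (f := fun k (_ : k ∈ spectrum ℂ A) => (‖k‖₊ : ENNReal)) z hz
  have := ENNReal.toReal_mono (spectralRadius_ne_top hd A) hle
  simpa [specRad] using this.trans h

end helpers

variable {d : ℕ}

lemma mem_spectrum_iff_det (A : Matrix (Fin d) (Fin d) ℂ) (z : ℂ) :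
    z ∈ spectrum ℂ A ↔ (z • (1 : Matrix (Fin d) (Fin d) ℂ) - A).det = 0 := by
  rw [spectrum.mem_iff, Algebra.algebraMap_eq_smul_one, Matrix.isUnit_iff_isUnit_det,
    isUnit_iff_ne_zero, not_not]

lemma charpoly_eval (A : Matrix (Fin d) (Fin d) ℂ) (z : ℂ) :
    A.charpoly.eval z = (z • (1 : Matrix (Fin d) (Fin d) ℂ) - A).det := by
  rw [Matrix.charpoly, eval_det, Matrix.matPolyEquiv_charmatrix]
  simp [Algebra.algebraMap_eq_smul_one]
  congr 1
  rw [Matrix.smul_eq_diagonal_mul, Matrix.mul_one]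

lemma aux_prod_lower {c : ℝ} (hc : 0 ≤ c) :
    ∀ s : Multiset ℂ, (∀ z ∈ s, c ≤ ‖z‖) → c ^ (Multiset.card s) ≤ ‖s.prod‖ := by
  intro s
  induction s using Multiset.induction with
  | empty => simp
  | cons a s ih =>
      intro h
      rw [Multiset.prod_cons, Multiset.card_cons, norm_mul, pow_succ']
      exact mul_le_mul (h a (Multiset.mem_cons_self a s))
        (ih fun z hz => h z (Multiset.mem_cons_of_mem hz))
        (pow_nonneg hc _) (norm_nonneg _)

lemma det_one_sub_norm_ge {γ : ℝ} (hγ1 : γ < 1) (A : Matrix (Fin d) (Fin d) ℂ)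
    (h : ∀ z ∈ spectrum ℂ A, ‖z‖ ≤ γ) :
    (1 - γ) ^ d ≤ ‖(1 - A).det‖ := by
  set B := (1 : Matrix (Fin d) (Fin d) ℂ) - A with hB
  have hdet : B.det = B.charpoly.roots.prod := Matrix.det_eq_prod_roots_charpoly B
  have hcard : Multiset.card B.charpoly.roots = d := by
    rw [(Polynomial.splits_iff_card_roots).mp (IsAlgClosed.splits _)]
    simp
  have hroot : ∀ z ∈ B.charpoly.roots, 1 - γ ≤ ‖z‖ := by
    intro z hz
    have hzr : B.charpoly.IsRoot z := (Polynomial.mem_roots (B.charpoly_monic.ne_zero)).mp hz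
    have hdz : (z • (1 : Matrix (Fin d) (Fin d) ℂ) - B).det = 0 := by
      rw [← charpoly_eval]; exact hzr
    have hkey : ((1 - z) • (1 : Matrix (Fin d) (Fin d) ℂ) - A)
        = -(z • (1 : Matrix (Fin d) (Fin d) ℂ) - B) := by
      rw [hB, sub_smul, one_smul]
      abel
    have hdz2 : ((1 - z) • (1 : Matrix (Fin d) (Fin d) ℂ) - A).det = 0 := by
      rw [hkey, Matrix.det_neg, hdz, mul_zero]
    have hmem : (1 - z) ∈ spectrum ℂ A := (mem_spectrum_iff_det A (1 - z)).mpr hdz2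
    have h1 := h _ hmem
    have : ‖(1 : ℂ)‖ - ‖1 - z‖ ≤ ‖z‖ := by
      have := norm_sub_norm_le (1 : ℂ) (1 - z)
      simpa using this
    simp only [norm_one] at this
    linarith
  calc (1 - γ) ^ d = (1 - γ) ^ (Multiset.card B.charpoly.roots) := by rw [hcard]
    _ ≤ ‖B.charpoly.roots.prod‖ := aux_prod_lower (by linarith) _ hroot
    _ = ‖B.det‖ := by rw [hdet]


/-- **Lemma 3.1 (Brayton–Tong type criterion under constraints).**
`Λ`-absolute asymptotic stability holds iff (1) all products along signals in `Λ` are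
uniformly bounded and (2) the spectral radii of all sufficiently long products along
signals in `Λ` are uniformly bounded away from `1`. -/
theorem abs_asymp_stable_iff_bounded_and_specRad {d : ℕ} (hd : 1 ≤ d) {I : Type*}
    [MetricSpace I] (S : I → Matrix (Fin d) (Fin d) ℂ) (hS : Continuous S)
    (Λ : Set (ℕ → I)) (hne : Λ.Nonempty) (hcomp : IsCompact Λ) (hinv : ShiftInv Λ) :
    (∀ x ∈ Λ, Filter.Tendsto (fun n : ℕ => prodS S x n) Filter.atTop (nhds 0)) ↔
      ((∃ β : ℝ, 0 < β ∧ ∀ ℓ : ℕ, 1 ≤ ℓ → ∀ x ∈ Λ, opNorm (prodS S x ℓ) ≤ β) ∧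
        ∃ γ : ℝ, 0 < γ ∧ γ < 1 ∧ ∃ N : ℕ, 1 ≤ N ∧
          ∀ ℓ : ℕ, N ≤ ℓ → ∀ x ∈ Λ, specRad (prodS S x ℓ) ≤ γ) := by
  constructor
  · intro h
    -- Step A: along each signal some product has norm < 1/2
    have stepA : ∀ y ∈ Λ, ∃ n, 1 ≤ n ∧ opNorm (prodS S y n) < 1/2 := by
      intro y hy
      have ht : Tendsto (fun n => Matrix.toEuclideanCLM (𝕜 := ℂ) (prodS S y n))
          atTop (nhds 0) := by
        have h2 := ((continuous_toEuclideanCLM (d := d)).tendsto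
          (0 : Matrix (Fin d) (Fin d) ℂ)).comp (h y hy)
        simpa [Function.comp_def] using h2
      have hnorm : Tendsto (fun n => opNorm (prodS S y n)) atTop (nhds 0) := by
        simpa [opNorm] using ht.norm
      have hev : ∀ᶠ n in atTop, opNorm (prodS S y n) < 1/2 :=
        hnorm.eventually_lt_const (by norm_num)
      obtain ⟨n, hn1, hn2⟩ := (hev.and (eventually_ge_atTop 1)).exists
      exact ⟨n, hn2, hn1⟩
    choose! nfun hn1 hnlt using stepA
    set U : (ℕ → I) → Set (ℕ → I) := fun y => {z | opNorm (prodS S z (nfun y)) < 1/2} with hU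
    have hUopen : ∀ y, IsOpen (U y) := by
      intro y
      have hc : Continuous fun z : ℕ → I => opNorm (prodS S z (nfun y)) :=
        ((continuous_toEuclideanCLM).comp (continuous_prodS S hS _)).norm
      exact isOpen_lt hc continuous_const
    have hcover : Λ ⊆ ⋃ y ∈ Λ, U y := fun z hz => Set.mem_biUnion hz (hnlt z hz)
    obtain ⟨t, htΛ, htfin, htcov⟩ :=
      hcomp.elim_finite_subcover_image (fun y _ => hUopen y) hcover
    set N₀ := max 1 (htfin.toFinset.sup nfun) with hN₀
    have hN₀1 : 1 ≤ N₀ := le_max_left _ _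
    have stepB : ∀ z ∈ Λ, ∃ m, 1 ≤ m ∧ m ≤ N₀ ∧ opNorm (prodS S z m) < 1/2 := by
      intro z hz
      obtain ⟨y, hyt, hzy⟩ := Set.mem_iUnion₂.mp (htcov hz)
      refine ⟨nfun y, hn1 y (htΛ hyt), ?_, hzy⟩
      exact le_trans (Finset.le_sup (htfin.mem_toFinset.mpr hyt)) (le_max_right _ _)
    have hbound : ∀ ℓ : ℕ, ∃ c : ℝ, ∀ z ∈ Λ, opNorm (prodS S z ℓ) ≤ c := by
      intro ℓ
      obtain ⟨c, hc⟩ := hcomp.exists_bound_of_continuousOn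
        (((continuous_toEuclideanCLM).comp (continuous_prodS S hS ℓ)).continuousOn)
      exact ⟨c, fun z hz => hc z hz⟩
    choose Cf hCf using hbound
    set Cm := 1 + ∑ j ∈ Finset.range (N₀+1), max (Cf j) 0 with hCm
    have hCm1 : 1 ≤ Cm := by
      have : (0:ℝ) ≤ ∑ j ∈ Finset.range (N₀+1), max (Cf j) 0 :=
        Finset.sum_nonneg fun j _ => le_max_right _ _
      linarith
    have hCmle : ∀ ℓ, ℓ ≤ N₀ → ∀ z ∈ Λ, opNorm (prodS S z ℓ) ≤ Cm := by
      intro ℓ hℓ z hz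
      have h1 : opNorm (prodS S z ℓ) ≤ Cf ℓ := hCf ℓ z hz
      have h2 : max (Cf ℓ) 0 ≤ ∑ j ∈ Finset.range (N₀+1), max (Cf j) 0 :=
        Finset.single_le_sum (f := fun j => max (Cf j) 0)
          (fun j _ => le_max_right _ _) (Finset.mem_range.mpr (by omega))
      have h3 := le_max_left (Cf ℓ) 0
      linarith
    have hsplit : ∀ z, ∀ m ℓ : ℕ, m ≤ ℓ →
        opNorm (prodS S z ℓ) ≤
          opNorm (prodS S (fun n => z (n + m)) (ℓ - m)) * opNorm (prodS S z m) := by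
      intro z m ℓ hm
      have he : prodS S z ℓ = prodS S (fun n => z (n + m)) (ℓ - m) * prodS S z m := by
        have e : m + (ℓ - m) = ℓ := by omega
        rw [← prodS_add, e]
      rw [he]
      exact opNorm_mul_le _ _
    have claim0 : ∀ ℓ, ∀ z ∈ Λ, opNorm (prodS S z ℓ) ≤ Cm := by
      intro ℓ
      induction ℓ using Nat.strong_induction_on with
      | _ ℓ ih =>
        intro z hz
        by_cases hℓ : ℓ ≤ N₀
        · exact hCmle ℓ hℓ z hz
        · obtain ⟨m, hm1, hmN, hmlt⟩ := stepB z hz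
          have hmℓ : m ≤ ℓ := le_of_lt (lt_of_le_of_lt hmN (lt_of_not_ge hℓ))
          have h1 := hsplit z m ℓ hmℓ
          have h2 : opNorm (prodS S (fun n => z (n + m)) (ℓ - m)) ≤ Cm :=
            ih (ℓ - m) (by omega) _ (shift_mem hinv hz m)
          have h3 : 0 ≤ opNorm (prodS S z m) := opNorm_nonneg _
          nlinarith [opNorm_nonneg (prodS S (fun n => z (n + m)) (ℓ - m))]
    have claimk : ∀ k, ∀ ℓ, k * N₀ ≤ ℓ → ∀ z ∈ Λ,
        opNorm (prodS S z ℓ) ≤ Cm * (1/2)^k := by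
      intro k
      induction k with
      | zero => intro ℓ _ z hz; simpa using claim0 ℓ z hz
      | succ k ih =>
        intro ℓ hℓ z hz
        have hNle : N₀ ≤ (k+1) * N₀ := by
          have : (k+1) * N₀ = k * N₀ + N₀ := by ring
          omega
        obtain ⟨m, hm1, hmN, hmlt⟩ := stepB z hz
        have hmℓ : m ≤ ℓ := le_trans hmN (le_trans hNle hℓ)
        have h1 := hsplit z m ℓ hmℓ
        have h2 : opNorm (prodS S (fun n => z (n + m)) (ℓ - m)) ≤ Cm * (1/2)^k := by
          apply ih
          · have : (k+1) * N₀ = k * N₀ + N₀ := by ring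
            omega
          · exact shift_mem hinv hz m
        have h3 : 0 ≤ opNorm (prodS S z m) := opNorm_nonneg _
        have h4 : (0:ℝ) ≤ Cm * (1/2)^k := by positivity
        have h5 : Cm * (1/2)^(k+1) = (Cm * (1/2)^k) * (1/2) := by ring
        rw [h5]
        nlinarith [opNorm_nonneg (prodS S (fun n => z (n + m)) (ℓ - m))]
    obtain ⟨k, hk⟩ := exists_pow_lt_of_lt_one
      (show (0:ℝ) < 1/(2*Cm) by positivity) (by norm_num : (1:ℝ)/2 < 1)
    have hCmhalf : Cm * (1/2)^k ≤ 1/2 := by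
      have hCm0 : (0:ℝ) < Cm := by linarith
      have h6 := mul_lt_mul_of_pos_left hk hCm0
      have h7 : Cm * (1/(2*Cm)) = 1/2 := by
        have hCmne : Cm ≠ 0 := ne_of_gt hCm0
        field_simp
      linarith
    refine ⟨⟨Cm, by linarith, fun ℓ _ x hx => claim0 ℓ x hx⟩,
      1/2, by norm_num, by norm_num, max 1 (k * N₀), le_max_left _ _, ?_⟩
    intro ℓ hℓ x hx
    have hkl : k * N₀ ≤ ℓ := le_trans (le_max_right _ _) hℓ
    exact le_trans (le_trans (specRad_le_opNorm hd _) (claimk k ℓ hkl x hx)) hCmhalf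
  · rintro ⟨⟨β, hβ0, hβ⟩, γ, hγ0, hγ1, N, hN1, hγle⟩ x hx
    set T : ℕ → (EuclideanSpace ℂ (Fin d) →L[ℂ] EuclideanSpace ℂ (Fin d)) :=
      fun n => Matrix.toEuclideanCLM (𝕜 := ℂ) (prodS S x n) with hT
    suffices hsuff : Tendsto T atTop (nhds 0) by
      have h2 : Tendsto (fun n => (Matrix.toEuclideanCLM (𝕜 := ℂ)).symm (T n)) atTop
          (nhds ((Matrix.toEuclideanCLM (𝕜 := ℂ)).symm 0)) :=
        ((continuous_toEuclideanCLM_symm (d := d)).tendsto 0).comp hsuff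
      simpa [hT] using h2
    by_contra hc
    have hTb : ∀ n, 1 ≤ n → ‖T n‖ ≤ β := fun n hn => hβ n hn x hx
    rw [tendsto_zero_iff_norm_tendsto_zero, Metric.tendsto_atTop] at hc
    push_neg at hc
    obtain ⟨ε, hε, hfreq⟩ := hc
    have hfreq' : ∃ᶠ n in atTop, ε ≤ ‖T n‖ := by
      rw [frequently_atTop]
      intro N0
      obtain ⟨n, hn1, hn2⟩ := hfreq N0
      exact ⟨n, hn1, by
        simpa [Real.dist_eq, abs_of_nonneg (norm_nonneg (T n))] using hn2⟩
    obtain ⟨φ, hφmono, hφ⟩ := Filter.extraction_of_frequently_atTop hfreq'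
    have hφadd : ∀ a b, φ a + b ≤ φ (a + b) := by
      intro a b
      induction b with
      | zero => simp
      | succ b ih =>
        have h9 : φ (a+b) < φ (a+b+1) := hφmono (by omega)
        have e : a + (b+1) = (a+b)+1 := by omega
        rw [e]
        omega
    set ψ : ℕ → ℕ := fun k => φ (N * (k+1)) with hψ
    have hψmono : StrictMono ψ := fun a b hab => by
      exact hφmono (by
        have : a + 1 < b + 1 := by omega
        exact mul_lt_mul_of_pos_left this (by omega))
    have hψgap : ∀ k, ψ k + N ≤ ψ (k+1) := by
      intro k
      have h1 := hφadd (N * (k+1)) N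
      have h2 : N * (k+1) + N = N * (k+2) := by ring
      rw [h2] at h1
      simpa [hψ] using h1
    have hψ1 : ∀ k, 1 ≤ ψ k := by
      intro k
      have h1 : N ≤ N * (k+1) := Nat.le_mul_of_pos_right N (by omega)
      have h1' : 1 ≤ N * (k+1) := le_trans hN1 h1
      exact le_trans h1' (hφmono.le_apply)
    have hψε : ∀ k, ε ≤ ‖T (ψ k)‖ := fun k => hφ _
    haveI : ProperSpace (EuclideanSpace ℂ (Fin d) →L[ℂ] EuclideanSpace ℂ (Fin d)) :=
      inferInstance
    have hball : IsCompact (Metric.closedBall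
        (0 : EuclideanSpace ℂ (Fin d) →L[ℂ] EuclideanSpace ℂ (Fin d)) β) :=
      isCompact_closedBall _ _
    have hmemball : ∀ k, T (ψ k) ∈ Metric.closedBall
        (0 : EuclideanSpace ℂ (Fin d) →L[ℂ] EuclideanSpace ℂ (Fin d)) β := by
      intro k
      rw [Metric.mem_closedBall, dist_zero_right]
      exact hTb _ (hψ1 k)
    obtain ⟨A, hAball, ρ₁, hρ₁, hρ₁t⟩ := hball.tendsto_subseq hmemball
    set m : ℕ → ℕ := fun j => ψ (ρ₁ j) with hm
    have hmgap : ∀ j, m j + N ≤ m (j+1) := by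
      intro j
      have h1 : ρ₁ j + 1 ≤ ρ₁ (j+1) := hρ₁ (Nat.lt_succ_self j)
      calc m j + N ≤ ψ (ρ₁ j + 1) := hψgap _
        _ ≤ ψ (ρ₁ (j+1)) := hψmono.monotone h1
    have hm1 : ∀ j, 1 ≤ m j := fun j => hψ1 _
    have hTm : Tendsto (fun j => T (m j)) atTop (nhds A) := hρ₁t
    have hεA : ε ≤ ‖A‖ :=
      ge_of_tendsto hTm.norm (Filter.Eventually.of_forall fun j => hψε (ρ₁ j))
    set R : ℕ → (EuclideanSpace ℂ (Fin d) →L[ℂ] EuclideanSpace ℂ (Fin d)) :=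
      fun j => Matrix.toEuclideanCLM (𝕜 := ℂ)
        (prodS S (fun n => x (n + m j)) (m (j+1) - m j)) with hR
    have hTR : ∀ j, T (m (j+1)) = R j * T (m j) := by
      intro j
      have hsplit2 : prodS S x (m (j+1)) =
          prodS S (fun n => x (n + m j)) (m (j+1) - m j) * prodS S x (m j) := by
        have e : m j + (m (j+1) - m j) = m (j+1) := by
          have := hmgap j
          omega
        rw [← prodS_add, e]
      show Matrix.toEuclideanCLM (𝕜 := ℂ) (prodS S x (m (j+1))) = _
      rw [hsplit2, map_mul]
    have hRball : ∀ j, R j ∈ Metric.closedBall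
        (0 : EuclideanSpace ℂ (Fin d) →L[ℂ] EuclideanSpace ℂ (Fin d)) β := by
      intro j
      rw [Metric.mem_closedBall, dist_zero_right]
      have := hmgap j
      exact hβ (m (j+1) - m j) (by omega) _ (shift_mem hinv hx (m j))
    obtain ⟨Q, hQball, ρ₂, hρ₂, hρ₂t⟩ := hball.tendsto_subseq hRball
    have hQA : A = Q * A := by
      have hto : Tendsto (fun i => ρ₂ i + 1) atTop atTop :=
        (tendsto_add_atTop_nat 1).comp hρ₂.tendsto_atTop
      have h1 : Tendsto (fun i => T (m (ρ₂ i + 1))) atTop (nhds A) := hTm.comp hto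
      have h2 : Tendsto (fun i => R (ρ₂ i) * T (m (ρ₂ i))) atTop (nhds (Q * A)) :=
        hρ₂t.mul (hTm.comp hρ₂.tendsto_atTop)
      have h3 : (fun i => T (m (ρ₂ i + 1))) = fun i => R (ρ₂ i) * T (m (ρ₂ i)) :=
        funext fun i => hTR _
      exact tendsto_nhds_unique (h3 ▸ h1) h2
    set Bm : Matrix (Fin d) (Fin d) ℂ := (Matrix.toEuclideanCLM (𝕜 := ℂ)).symm Q with hBm
    have hBt : Tendsto (fun i =>
        prodS S (fun n => x (n + m (ρ₂ i))) (m (ρ₂ i + 1) - m (ρ₂ i))) atTop (nhds Bm) := by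
      have h4 := ((continuous_toEuclideanCLM_symm (d := d)).tendsto Q).comp hρ₂t
      simpa [hR, hBm, Function.comp_def] using h4
    have hspec : ∀ i, (1 - γ)^d ≤
        ‖(1 - prodS S (fun n => x (n + m (ρ₂ i))) (m (ρ₂ i + 1) - m (ρ₂ i))).det‖ := by
      intro i
      apply det_one_sub_norm_ge hγ1
      intro z hz
      refine norm_le_of_mem_spectrum hd ?_ hz
      apply hγle
      · have := hmgap (ρ₂ i)
        omega
      · exact shift_mem hinv hx _
    have hdetB : (1 - γ)^d ≤ ‖(1 - Bm).det‖ := by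
      have hc1 : Continuous fun M : Matrix (Fin d) (Fin d) ℂ =>
          (1 : Matrix (Fin d) (Fin d) ℂ) - M :=
        continuous_const.sub continuous_id
      have hc2 : Continuous fun M : Matrix (Fin d) (Fin d) ℂ =>
          ‖((1 : Matrix (Fin d) (Fin d) ℂ) - M).det‖ := (hc1.matrix_det).norm
      exact ge_of_tendsto ((hc2.tendsto Bm).comp hBt)
        (Filter.Eventually.of_forall hspec)
    have hdet0 : ((1:Matrix (Fin d) (Fin d) ℂ) - Bm).det ≠ 0 := by
      intro h0
      rw [h0, norm_zero] at hdetB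
      have : (0:ℝ) < (1 - γ)^d := pow_pos (by linarith) d
      linarith
    have hunitB : IsUnit ((1 : Matrix (Fin d) (Fin d) ℂ) - Bm) :=
      (Matrix.isUnit_iff_isUnit_det _).mpr (isUnit_iff_ne_zero.mpr hdet0)
    have hQ1 : (1 : EuclideanSpace ℂ (Fin d) →L[ℂ] EuclideanSpace ℂ (Fin d)) - Q
        = Matrix.toEuclideanCLM (𝕜 := ℂ) (1 - Bm) := by
      rw [map_sub, map_one, hBm, StarAlgEquiv.apply_symm_apply]
    have hunitQ : IsUnit ((1 : EuclideanSpace ℂ (Fin d) →L[ℂ] EuclideanSpace ℂ (Fin d)) - Q) := by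
      rw [hQ1]
      exact hunitB.map _
    obtain ⟨u, hu⟩ := hunitQ
    have hzero : ((1 : EuclideanSpace ℂ (Fin d) →L[ℂ] EuclideanSpace ℂ (Fin d)) - Q) * A = 0 := by
      rw [sub_mul, one_mul, ← hQA, sub_self]
    have hA0 : A = 0 := by
      calc A = 1 * A := (one_mul A).symm
        _ = (↑u⁻¹ * ↑u) * A := by rw [u.inv_mul]
        _ = ↑u⁻¹ * ((1 - Q) * A) := by rw [mul_assoc, hu]
        _ = 0 := by rw [hzero, mul_zero]
    rw [hA0, norm_zero] at hεA
    linarith
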